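/- Let z be the Avdispahić–Zejnulahi sequence, let m(n) = (z(2) + ⋯ + z(n))/(n+1) for n ≥ 1 (which is an integer), and let γ = (√5−1)/2. Then m(n) = ⌊(n+1)γ⌋ for every n ≥ 1 that is not of the form F_{2k+1} − 1 with k ≥ 1; and for all k ≥ 1, m(F_{2k+1} − 1) = F_{2k} − 1 while ⌊F_{2k+1}·γ⌋ = F_{2k}. -/

import Mathlib

noncomputable section
open Nat (fib)


def azg : ℝ := (Real.sqrt 5 - 1) / 2

lemma sqrt5_gt : (2:ℝ) < Real.sqrt 5 := by
  have := Real.lt_sqrt (x := 2) (y := 5) (by norm_num)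
  rw [this]; norm_num

lemma sqrt5_lt : Real.sqrt 5 < 3 := by
  have : Real.sqrt 5 < 3 ↔ (5:ℝ) < 3^2 := Real.sqrt_lt' (by norm_num)
  rw [this]; norm_num

lemma azg_pos : 0 < azg := by unfold azg; linarith [sqrt5_gt]
lemma azg_lt_one : azg < 1 := by unfold azg; linarith [sqrt5_lt]
lemma azg_half : (1:ℝ)/2 < azg := by unfold azg; linarith [sqrt5_gt]

lemma azg_sq : azg ^ 2 = 1 - azg := by
  have h5 : Real.sqrt 5 ^ 2 = 5 := Real.sq_sqrt (by norm_num)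
  unfold azg; nlinarith [h5]

lemma azg_irr : Irrational azg := by
  have h : Irrational (Real.sqrt 5) := (Nat.prime_five).irrational_sqrt
  have := (h.sub_natCast 1).div_natCast (m := 2) (by norm_num)
  simpa [azg] using this

def azb (n : ℕ) : ℕ := ⌊(n:ℝ) * azg⌋₊

lemma azb_nonneg_aux (n : ℕ) : (0:ℝ) ≤ (n:ℝ) * azg :=
  mul_nonneg (Nat.cast_nonneg n) azg_pos.le

lemma azb_lt (n : ℕ) (hn : 1 ≤ n) : azb n < n := by
  unfold azb
  have hlt : (n:ℝ) * azg < n := by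
    have h1 : (1:ℝ) ≤ n := by exact_mod_cast hn
    nlinarith [azg_lt_one, azg_pos]
  exact (Nat.floor_lt (azb_nonneg_aux n)).2 hlt

lemma azb_ge_iff {k n : ℕ} (hk : 1 ≤ k) : k ≤ azb n ↔ k + azb k + 1 ≤ n := by
  rcases le_or_gt n k with h | h
  · constructor
    · intro hb
      exfalso
      rcases Nat.eq_zero_or_pos n with h0 | h0
      · subst h0; simp [azb] at hb; omega
      · have := azb_lt n h0
        have hkn : k ≤ azb n := hb
        omega
    · intro hle; omega
  · unfold azb
    rw [Nat.le_floor_iff (azb_nonneg_aux n)]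
    have key : ((k:ℝ) ≤ n * azg) ↔ ((k:ℝ) * azg ≤ (n:ℝ) - k) := by
      constructor
      · intro hh
        have h2 : (n:ℝ) * azg * (1 + azg) = n := by nlinarith [azg_sq]
        nlinarith [azg_pos]
      · intro hh
        have h2 : ((n:ℝ) - k - k * azg) * azg ≥ 0 := by nlinarith [azg_pos]
        nlinarith [azg_sq]
    rw [key]
    have hirr : Irrational ((k:ℝ) * azg) := by
      have := azg_irr.natCast_mul (m := k) (by omega)
      simpa using this
    have hne : (k:ℝ) * azg ≠ ((n - k : ℕ) : ℝ) := fun hEq => (hirr.ne_nat _) (by exact_mod_cast hEq)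
    have hcast : ((n - k : ℕ) : ℝ) = (n:ℝ) - k := by
      push_cast [Nat.cast_sub h.le]; ring
    constructor
    · intro hh
      have hlt : (k:ℝ) * azg < ((n-k:ℕ):ℝ) := lt_of_le_of_ne (by rw [hcast]; exact hh) hne
      have : ⌊(k:ℝ)*azg⌋₊ < n - k := (Nat.floor_lt (azb_nonneg_aux k)).2 hlt
      omega
    · intro hh
      have h1 : ⌊(k:ℝ)*azg⌋₊ + 1 ≤ n - k := by omega
      have h2 : (⌊(k:ℝ)*azg⌋₊ :ℝ) + 1 ≤ ((n-k:ℕ):ℝ) := by exact_mod_cast h1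
      have h3 : (k:ℝ) * azg < (⌊(k:ℝ)*azg⌋₊:ℝ) + 1 := Nat.lt_floor_add_one _
      rw [← hcast]; linarith


lemma azb_mono : Monotone azb := by
  intro a b hab
  exact Nat.floor_mono (by
    have : (a:ℝ) ≤ b := by exact_mod_cast hab
    nlinarith [azg_pos])

lemma azb_one : azb 1 = 0 := by
  unfold azb
  rw [Nat.floor_eq_zero]
  simpa using azg_lt_one

lemma azb_succ_le (n : ℕ) : azb (n+1) ≤ azb n + 1 := by
  by_contra h
  push_neg at h
  have h2 : azb n + 2 ≤ azb (n+1) := h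
  set k := azb n with hk
  have h3 : (k+2) + azb (k+2) + 1 ≤ n + 1 := (azb_ge_iff (by omega)).1 h2
  have h4 : ¬ (k + 1 ≤ azb n) := by omega
  have h5 : ¬ ((k+1) + azb (k+1) + 1 ≤ n) := fun hc => h4 ((azb_ge_iff (by omega)).2 hc)
  have h6 : azb (k+1) ≤ azb (k+2) := azb_mono (by omega)
  omega

lemma azb_two_add (n : ℕ) : azb n + 1 ≤ azb (n+2) := by
  rcases Nat.eq_zero_or_pos (azb n) with h0 | h0
  · rw [h0]
    have : 1 + azb 1 + 1 ≤ n + 2 := by rw [azb_one]; omega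
    exact (azb_ge_iff (by omega)).2 this
  · set k := azb n with hk
    have h1 : k + azb k + 1 ≤ n := (azb_ge_iff h0).1 (le_refl _)
    have h2 : azb (k+1) ≤ azb k + 1 := azb_succ_le k
    have : (k+1) + azb (k+1) + 1 ≤ n + 2 := by omega
    exact (azb_ge_iff (by omega)).2 this

lemma azb_dichotomy (n : ℕ) : azb (n+1) = azb n ∨ azb (n+1) = azb n + 1 := by
  have h1 := azb_succ_le n
  have h2 : azb n ≤ azb (n+1) := azb_mono (by omega)
  omega

lemma azb_ge_one {n : ℕ} (hn : 2 ≤ n) : 1 ≤ azb n :=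
  (azb_ge_iff (by omega)).2 (by rw [azb_one]; omega)

lemma azb_two : azb 2 = 1 := by
  have := azb_ge_one (le_refl 2)
  have := azb_lt 2 (by omega)
  omega

/-- small position shape -/
lemma az_small_shape {j t : ℕ} (ht : 1 ≤ t) (h1 : azb j = t) (h2 : azb (j+1) = t) :
    j = t + azb t + 1 ∧ azb (t+1) = azb t + 1 := by
  have ha : t + azb t + 1 ≤ j := (azb_ge_iff ht).1 (by omega)
  have hb : ¬ ((t+1) + azb (t+1) + 1 ≤ j + 1) := fun hc => by
    have := (azb_ge_iff (k := t+1) (by omega)).2 hc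
    omega
  have hc := azb_succ_le t
  have hd : azb t ≤ azb (t+1) := azb_mono (by omega)
  omega

/-- emission: if `azb` jumps at `t`, then position `t + azb t + 1` has plateau value `t` -/
lemma az_emit {t : ℕ} (ht : 1 ≤ t) (hj : azb (t+1) = azb t + 1) :
    azb (t + azb t + 1) = t ∧ azb (t + azb t + 2) = t := by
  have ha : t ≤ azb (t + azb t + 1) := (azb_ge_iff ht).2 (by omega)
  have hb : ¬ (t + 1 ≤ azb (t + azb t + 1)) := fun hc => by
    have := (azb_ge_iff (k := t+1) (by omega)).1 hc
    omega
  have hc : ¬ (t + 1 ≤ azb (t + azb t + 2)) := fun hcc => by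
    have := (azb_ge_iff (k := t+1) (by omega)).1 hcc
    omega
  have hd : azb (t + azb t + 1) ≤ azb (t + azb t + 2) := azb_mono (by omega)
  omega


lemma azg_pow_pos (m : ℕ) : 0 < azg ^ m := pow_pos azg_pos m
lemma azg_pow_lt_one (m : ℕ) (hm : 1 ≤ m) : azg ^ m < 1 := pow_lt_one₀ azg_pos.le azg_lt_one (by omega)
lemma azg_pow_anti {a b : ℕ} (h : a < b) : azg ^ b < azg ^ a :=
  pow_lt_pow_right_of_lt_one₀ azg_pos azg_lt_one h

lemma az_fib_mul (k : ℕ) :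
    ((fib (2*k+1) : ℝ) * azg = fib (2*k) + azg^(2*k+1)) ∧
    ((fib (2*k+2) : ℝ) * azg = fib (2*k+1) - azg^(2*k+2)) := by
  induction k with
  | zero =>
    refine ⟨by simp [Nat.fib_one], ?_⟩
    simp [Nat.fib_one, Nat.fib_two]
    nlinarith [azg_sq]
  | succ k ih =>
    obtain ⟨h1, h2⟩ := ih
    rw [show 2*(k+1)+1 = 2*k+3 by ring, show 2*(k+1)+2 = 2*k+4 by ring,
        show 2*(k+1) = 2*k+2 by ring]
    have e1 : (fib (2*k+3) : ℝ) = fib (2*k+1) + fib (2*k+2) := by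
      rw [show 2*k+3 = (2*k+1)+2 by ring, Nat.fib_add_two]; push_cast; ring
    have e2 : (fib (2*k+4) : ℝ) = fib (2*k+2) + fib (2*k+3) := by
      rw [show 2*k+4 = (2*k+2)+2 by ring, Nat.fib_add_two]; push_cast; ring
    have e3 : (fib (2*k+2) : ℝ) = fib (2*k) + fib (2*k+1) := by
      rw [show 2*k+2 = (2*k)+2 by ring, Nat.fib_add_two]; push_cast; ring
    have hs1 : azg^(2*k+3) = azg^(2*k+1) - azg^(2*k+2) := by
      have h : azg^(2*k+3) = azg^(2*k+1)*azg^2 := by ring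
      rw [h, azg_sq]; ring
    have hs2 : azg^(2*k+4) = azg^(2*k+2) - azg^(2*k+3) := by
      have h : azg^(2*k+4) = azg^(2*k+2)*azg^2 := by ring
      rw [h, azg_sq]; ring
    constructor
    · calc (fib (2*k+3) : ℝ) * azg = (fib (2*k+1):ℝ)*azg + (fib (2*k+2):ℝ)*azg := by
            rw [e1]; ring
        _ = (fib (2*k):ℝ) + azg^(2*k+1) + ((fib (2*k+1):ℝ) - azg^(2*k+2)) := by rw [h1, h2]
        _ = (fib (2*k+2):ℝ) + azg^(2*k+3) := by rw [e3, hs1]; ring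
    · calc (fib (2*k+4) : ℝ) * azg = (fib (2*k+2):ℝ)*azg + (fib (2*k+3):ℝ)*azg := by
            rw [e2]; ring
        _ = (fib (2*k+1):ℝ) - azg^(2*k+2) + ((fib (2*k+2):ℝ) + azg^(2*k+3)) := by
            rw [h2]
            have : (fib (2*k+3) : ℝ) * azg = (fib (2*k+2):ℝ) + azg^(2*k+3) := by
              calc (fib (2*k+3) : ℝ) * azg = (fib (2*k+1):ℝ)*azg + (fib (2*k+2):ℝ)*azg := by
                    rw [e1]; ring
                _ = (fib (2*k):ℝ) + azg^(2*k+1) + ((fib (2*k+1):ℝ) - azg^(2*k+2)) := by rw [h1, h2]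
                _ = (fib (2*k+2):ℝ) + azg^(2*k+3) := by rw [e3, hs1]; ring
            rw [this]
        _ = (fib (2*k+3):ℝ) - azg^(2*k+4) := by rw [e1, hs2]; ring

lemma azb_eq_of {x y : ℕ} (h1 : (y:ℝ) ≤ x * azg) (h2 : (x:ℝ)*azg < y + 1) : azb x = y := by
  unfold azb
  rw [Nat.floor_eq_iff (azb_nonneg_aux x)]
  exact ⟨h1, h2⟩

lemma az_f1 (k : ℕ) : azb (fib (2*k+1)) = fib (2*k) := by
  obtain ⟨h1, _⟩ := az_fib_mul k
  exact azb_eq_of (by rw [h1]; nlinarith [azg_pow_pos (2*k+1)])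
    (by rw [h1]; nlinarith [azg_pow_lt_one (2*k+1) (by omega)])

lemma az_f2 (k : ℕ) (hk : 1 ≤ k) : azb (fib (2*k+1) - 1) = fib (2*k) - 1 := by
  obtain ⟨h1, _⟩ := az_fib_mul k
  have hf1 : 1 ≤ fib (2*k+1) := Nat.fib_pos.2 (by omega)
  have hf2 : 1 ≤ fib (2*k) := Nat.fib_pos.2 (by omega)
  have hc : ((fib (2*k+1) - 1 : ℕ) : ℝ) = (fib (2*k+1) : ℝ) - 1 := by
    push_cast [Nat.cast_sub hf1]; ring
  have hc2 : ((fib (2*k) - 1 : ℕ) : ℝ) = (fib (2*k) : ℝ) - 1 := by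
    push_cast [Nat.cast_sub hf2]; ring
  have hpow : azg^(2*k+1) < azg := by
    have := azg_pow_anti (a := 1) (b := 2*k+1) (by omega)
    simpa using this
  apply azb_eq_of
  · rw [hc, hc2]
    have : ((fib (2*k+1) : ℝ) - 1) * azg = fib (2*k) + azg^(2*k+1) - azg := by
      rw [sub_mul, h1]; ring
    rw [this]
    nlinarith [azg_lt_one, azg_pow_pos (2*k+1), azg_pos]
  · rw [hc, hc2]
    have : ((fib (2*k+1) : ℝ) - 1) * azg = fib (2*k) + azg^(2*k+1) - azg := by
      rw [sub_mul, h1]; ring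
    rw [this]
    nlinarith [azg_pow_pos (2*k+1), azg_pos]

lemma az_f3 (k : ℕ) (hk : 1 ≤ k) : azb (fib (2*k+1) + 1) = fib (2*k) := by
  obtain ⟨h1, _⟩ := az_fib_mul k
  have hpow : azg^(2*k+1) < azg^2 := azg_pow_anti (by omega)
  apply azb_eq_of
  · push_cast
    rw [add_mul, h1]
    nlinarith [azg_pos, azg_pow_pos (2*k+1)]
  · push_cast
    rw [add_mul, h1]
    nlinarith [azg_sq, azg_pos]

lemma az_f4 (k : ℕ) (hk : 1 ≤ k) : azb (fib (2*k)) = fib (2*k-1) - 1 := by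
  obtain ⟨_, h2⟩ := az_fib_mul (k-1)
  have e : 2*(k-1)+2 = 2*k := by omega
  have e2 : 2*(k-1)+1 = 2*k-1 := by omega
  rw [e, e2] at h2
  have hf : 1 ≤ fib (2*k-1) := Nat.fib_pos.2 (by omega)
  have hc2 : ((fib (2*k-1) - 1 : ℕ) : ℝ) = (fib (2*k-1) : ℝ) - 1 := by
    push_cast [Nat.cast_sub hf]; ring
  apply azb_eq_of
  · rw [hc2, h2]
    nlinarith [azg_pow_lt_one (2*k) (by omega), azg_pow_anti (a := 2*k-1) (b := 2*k) (by omega), azg_pow_lt_one (2*k-1) (by omega)]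
  · rw [hc2, h2]
    nlinarith [azg_pow_pos (2*k)]

lemma az_f5 (k : ℕ) (hk : 2 ≤ k) : azb (fib (2*k) - 1) = fib (2*k-1) - 1 := by
  obtain ⟨_, h2⟩ := az_fib_mul (k-1)
  have e : 2*(k-1)+2 = 2*k := by omega
  have e2 : 2*(k-1)+1 = 2*k-1 := by omega
  rw [e, e2] at h2
  have hf : 1 ≤ fib (2*k) := Nat.fib_pos.2 (by omega)
  have hf2 : 1 ≤ fib (2*k-1) := Nat.fib_pos.2 (by omega)
  have hc : ((fib (2*k) - 1 : ℕ) : ℝ) = (fib (2*k) : ℝ) - 1 := by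
    push_cast [Nat.cast_sub hf]; ring
  have hc2 : ((fib (2*k-1) - 1 : ℕ) : ℝ) = (fib (2*k-1) : ℝ) - 1 := by
    push_cast [Nat.cast_sub hf2]; ring
  have hkey : ((fib (2*k) : ℝ) - 1) * azg = fib (2*k-1) - azg^(2*k) - azg := by
    rw [sub_mul, h2]; ring
  have hpow : azg^(2*k) < azg^2 := azg_pow_anti (by omega)
  apply azb_eq_of
  · rw [hc, hc2, hkey]
    nlinarith [azg_sq, azg_pos]
  · rw [hc, hc2, hkey]
    nlinarith [azg_pow_pos (2*k), azg_pos]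

lemma az_f6 (k : ℕ) (hk : 1 ≤ k) : azb (fib (2*k) + 1) = fib (2*k-1) := by
  obtain ⟨_, h2⟩ := az_fib_mul (k-1)
  have e : 2*(k-1)+2 = 2*k := by omega
  have e2 : 2*(k-1)+1 = 2*k-1 := by omega
  rw [e, e2] at h2
  have hpow : azg^(2*k) < azg := by
    have := azg_pow_anti (a := 1) (b := 2*k) (by omega)
    simpa using this
  apply azb_eq_of
  · push_cast
    rw [add_mul, h2]
    nlinarith [azg_pos, azg_pow_pos (2*k), azg_lt_one, azg_sq]
  · push_cast
    rw [add_mul, h2]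
    nlinarith [azg_lt_one, azg_pow_pos (2*k)]

lemma az_f8 (k : ℕ) (hk : 2 ≤ k) : azb (fib (2*k) + 2) = fib (2*k-1) + 1 := by
  obtain ⟨_, h2⟩ := az_fib_mul (k-1)
  have e : 2*(k-1)+2 = 2*k := by omega
  have e2 : 2*(k-1)+1 = 2*k-1 := by omega
  rw [e, e2] at h2
  have hpow : azg^(2*k) < azg^3 := azg_pow_anti (by omega)
  have hg3 : azg^3 = 2*azg - 1 := by
    have : azg^3 = azg * azg^2 := by ring
    rw [this, azg_sq]; nlinarith [azg_sq]
  apply azb_eq_of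
  · push_cast
    rw [add_mul, h2]
    nlinarith [azg_pos, azg_pow_pos (2*k), azg_lt_one, azg_sq]
  · push_cast
    rw [add_mul, h2]
    nlinarith [azg_pow_pos (2*k), azg_lt_one]


def azE (n : ℕ) : Prop := ∃ k : ℕ, 1 ≤ k ∧ n = fib (2*k+1) - 1

open Classical in
def azS (n : ℕ) : ℕ := (n+1) * (azb (n+1) - (if azE n then 1 else 0))

open Classical in
def azc (n : ℕ) : ℕ :=
  if n = 1 then 1 else
  if azE n then azb n else
  if azE (n-1) then n + azb (n+1) else
  if azb (n+1) = azb n then azb n else n + azb (n+1)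

lemma fib3 : fib 3 = 2 := by decide
lemma fib4 : fib 4 = 3 := by decide

lemma azE_one : azE 1 := ⟨1, le_refl 1, by rw [show 2*1+1 = 3 by ring, fib3]⟩

lemma azE_fib_odd_false {k : ℕ} (hk : 1 ≤ k) : ¬ azE (fib (2*k+1)) := by
  rintro ⟨j, hj, hEq⟩
  have hfj : 1 ≤ fib (2*j+1) := Nat.fib_pos.2 (by omega)
  have hEq2 : fib (2*j+1) = fib (2*k+1) + 1 := by omega
  rcases le_or_gt (2*j+1) (2*k+1) with h | h
  · have := Nat.fib_mono h
    omega
  · have h2 : 2*k+3 ≤ 2*j+1 := by omega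
    have h3 : fib (2*k+3) ≤ fib (2*j+1) := Nat.fib_mono h2
    have h4 : fib (2*k+3) = fib (2*k+1) + fib (2*k+2) := by
      rw [show 2*k+3 = (2*k+1)+2 by ring, Nat.fib_add_two]
    have h5 : fib 4 ≤ fib (2*k+2) := Nat.fib_mono (by omega)
    rw [fib4] at h5
    omega

lemma azE_succ_false {n : ℕ} (h : azE n) : ¬ azE (n+1) := by
  obtain ⟨k, hk, rfl⟩ := h
  have hfj : 1 ≤ fib (2*k+1) := Nat.fib_pos.2 (by omega)
  have : fib (2*k+1) - 1 + 1 = fib (2*k+1) := by omega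
  rw [this]
  exact azE_fib_odd_false hk

lemma azE_two_le {n : ℕ} (hn : 2 ≤ n) (h : azE n) : ∃ k, 2 ≤ k ∧ n = fib (2*k+1) - 1 := by
  obtain ⟨k, hk, rfl⟩ := h
  refine ⟨k, ?_, rfl⟩
  by_contra hc
  have : k = 1 := by omega
  subst this
  rw [show 2*1+1 = 3 by ring, fib3] at hn
  omega

lemma azE_ge_one {n : ℕ} (h : azE n) : 1 ≤ n := by
  obtain ⟨k, hk, rfl⟩ := h
  have : fib 3 ≤ fib (2*k+1) := Nat.fib_mono (by omega)
  rw [fib3] at this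
  omega

/-- if `azE n` then `azb` jumps at `n` and identifies Fibonacci values -/
lemma azE_jump {n : ℕ} (h : azE n) : azb (n+1) = azb n + 1 := by
  obtain ⟨k, hk, rfl⟩ := h
  have hf : 1 ≤ fib (2*k+1) := Nat.fib_pos.2 (by omega)
  have hf2 : 1 ≤ fib (2*k) := Nat.fib_pos.2 (by omega)
  have e : fib (2*k+1) - 1 + 1 = fib (2*k+1) := by omega
  rw [e, az_f1 k, az_f2 k hk]
  omega

/-- if `azE (n-1)` (with `n ≥ 2`) then `azb` plateaus at `n` -/
lemma azE_pred_plateau {n : ℕ} (hn : 2 ≤ n) (h : azE (n-1)) : azb (n+1) = azb n := by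
  obtain ⟨k, hk, hEq⟩ := h
  have hf : 1 ≤ fib (2*k+1) := Nat.fib_pos.2 (by omega)
  have hne : n = fib (2*k+1) := by omega
  subst hne
  rw [az_f1 k, az_f3 k hk]

lemma azS_one : azS 1 = 0 := by
  unfold azS
  rw [if_pos azE_one, azb_two]

lemma azS_zero : azS 0 = 0 := by
  unfold azS
  rw [azb_one]
  simp

/-- the key recursion for `azS` -/
lemma azS_step {n : ℕ} (hn : 1 ≤ n) : azS (n+1) = azS n + azc (n+1) := by
  have hm2 : 2 ≤ n + 1 := by omega
  obtain ⟨B, hB⟩ : ∃ B, azb (n+1) = B + 1 :=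
    ⟨azb (n+1) - 1, by have := azb_ge_one hm2; omega⟩
  by_cases h1 : azE (n+1)
  · have hnE : ¬ azE n := fun hc => azE_succ_false hc h1
    have hj : azb (n+1+1) = azb (n+1) + 1 := azE_jump h1
    have hc : azc (n+1) = azb (n+1) := by
      unfold azc
      rw [if_neg (by omega), if_pos h1]
    unfold azS
    rw [if_pos h1, if_neg hnE, hc, hj, hB]
    simp only [Nat.sub_zero, Nat.add_sub_cancel]
    ring
  · by_cases h2 : azE n
    · have hplat : azb (n+1+1) = azb (n+1) :=
        azE_pred_plateau hm2 (by simpa using h2)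
      have hc : azc (n+1) = (n+1) + azb (n+1+1) := by
        unfold azc
        rw [if_neg (by omega : ¬ (n+1 = 1)), if_neg h1, if_pos (show azE (n+1-1) from by simpa using h2)]
      unfold azS
      rw [if_neg h1, if_pos h2, hc, hplat, hB]
      simp only [Nat.sub_zero, Nat.add_sub_cancel]
      ring
    · rcases azb_dichotomy (n+1) with h3 | h3
      · have hc : azc (n+1) = azb (n+1) := by
          unfold azc
          rw [if_neg (by omega : ¬ (n+1 = 1)), if_neg h1, if_neg (show ¬ azE (n+1-1) from by simpa using h2), if_pos h3]
        unfold azS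
        rw [if_neg h1, if_neg h2, hc, h3]
        simp only [Nat.sub_zero]
        ring
      · have hc : azc (n+1) = (n+1) + azb (n+1+1) := by
          unfold azc
          rw [if_neg (by omega : ¬ (n+1 = 1)), if_neg h1, if_neg (show ¬ azE (n+1-1) from by simpa using h2), if_neg (by omega)]
        unfold azS
        rw [if_neg h1, if_neg h2, hc, h3]
        simp only [Nat.sub_zero]
        ring

lemma azc_one : azc 1 = 1 := by unfold azc; rw [if_pos rfl]

lemma azc_sum {p : ℕ} (hp : 1 ≤ p) : (∑ i ∈ Finset.Icc 1 p, azc i) = 1 + azS p := by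
  induction p, hp using Nat.le_induction with
  | base => simp [azc_one, azS_one]
  | succ p hp ih =>
    rw [Finset.sum_Icc_succ_top (by omega), ih, azS_step hp]
    ring


lemma fib5 : fib 5 = 5 := by decide

lemma azc_of_E {n : ℕ} (hn : 2 ≤ n) (h : azE n) : azc n = azb n := by
  unfold azc; rw [if_neg (by omega : ¬ (n = 1)), if_pos h]

lemma azc_of_Epred {n : ℕ} (hn : 2 ≤ n) (h1 : ¬ azE n) (h2 : azE (n-1)) :
    azc n = n + azb (n+1) := by
  unfold azc; rw [if_neg (by omega : ¬ (n = 1)), if_neg h1, if_pos h2]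

lemma azc_of_plateau {n : ℕ} (hn : 2 ≤ n) (h1 : ¬ azE n) (h2 : ¬ azE (n-1))
    (h3 : azb (n+1) = azb n) : azc n = azb n := by
  unfold azc; rw [if_neg (by omega : ¬ (n = 1)), if_neg h1, if_neg h2, if_pos h3]

lemma azc_of_jump {n : ℕ} (hn : 2 ≤ n) (h1 : ¬ azE n) (h2 : ¬ azE (n-1))
    (h3 : azb (n+1) = azb n + 1) : azc n = n + azb (n+1) := by
  unfold azc; rw [if_neg (by omega : ¬ (n = 1)), if_neg h1, if_neg h2, if_neg (by omega)]

lemma azc_cases {n : ℕ} (hn : 2 ≤ n) :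
    (azc n = azb n ∧ (azE n ∨ (¬ azE n ∧ ¬ azE (n-1) ∧ azb (n+1) = azb n))) ∨
    (azc n = n + azb (n+1) ∧ ¬ azE n ∧
      ((azE (n-1) ∧ azb (n+1) = azb n) ∨ (¬ azE (n-1) ∧ azb (n+1) = azb n + 1))) := by
  by_cases h1 : azE n
  · exact Or.inl ⟨azc_of_E hn h1, Or.inl h1⟩
  · by_cases h2 : azE (n-1)
    · exact Or.inr ⟨azc_of_Epred hn h1 h2, h1, Or.inl ⟨h2, azE_pred_plateau hn h2⟩⟩
    · rcases azb_dichotomy n with h3 | h3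
      · exact Or.inl ⟨azc_of_plateau hn h1 h2 h3, Or.inr ⟨h1, h2, h3⟩⟩
      · exact Or.inr ⟨azc_of_jump hn h1 h2 h3, h1, Or.inr ⟨h2, h3⟩⟩

lemma azE_pred_fib {n : ℕ} (hn : 2 ≤ n) (h : azE (n-1)) : ∃ i, 1 ≤ i ∧ n = fib (2*i+1) := by
  obtain ⟨i, hi, hEq⟩ := h
  have : 1 ≤ fib (2*i+1) := Nat.fib_pos.2 (by omega)
  exact ⟨i, hi, by omega⟩

lemma az_fib_ne {k i : ℕ} (hk : 2 ≤ k) (hi : 1 ≤ i) : fib (2*i+2) ≠ fib (2*k) - 1 := by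
  intro h
  have h4 : fib 4 ≤ fib (2*k) := Nat.fib_mono (by omega)
  rw [fib4] at h4
  rcases le_or_gt (2*k) (2*i+2) with hle | hlt
  · have := Nat.fib_mono hle
    omega
  · have h2 : fib (2*i+2) ≤ fib (2*k-1) := Nat.fib_mono (by omega)
    have h3 : fib (2*k-2+2) = fib (2*k-2) + fib (2*k-2+1) := Nat.fib_add_two
    rw [show 2*k-2+2 = 2*k from by omega, show 2*k-2+1 = 2*k-1 from by omega] at h3
    by_cases hk3 : 3 ≤ k
    · have h5 : fib 3 ≤ fib (2*k-2) := Nat.fib_mono (by omega)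
      rw [fib3] at h5
      omega
    · have : k = 2 := by omega
      omega

/-- facts for an exceptional small position -/
lemma azE_val_facts {n : ℕ} (hn : 2 ≤ n) (hE : azE n) :
    ∃ k, 2 ≤ k ∧ azb n = fib (2*k) - 1 ∧ 3 ≤ fib (2*k) ∧
      azb (azb n) = fib (2*k-1) - 1 ∧ azb (azb n + 1) = fib (2*k-1) - 1 := by
  obtain ⟨k, hk, hkEq⟩ := azE_two_le hn hE
  have hf1 : 1 ≤ fib (2*k+1) := Nat.fib_pos.2 (by omega)
  have hbn : azb n = fib (2*k) - 1 := by rw [hkEq]; exact az_f2 k (by omega)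
  have h4 : fib 4 ≤ fib (2*k) := Nat.fib_mono (by omega)
  rw [fib4] at h4
  have e1 : azb n + 1 = fib (2*k) := by omega
  refine ⟨k, hk, hbn, by omega, ?_, ?_⟩
  · rw [hbn]; exact az_f5 k hk
  · rw [e1]; exact az_f4 k (by omega)

lemma azc_inj {j n : ℕ} (hj : 1 ≤ j) (hjn : j < n) (hn : 2 ≤ n) : azc j ≠ azc n := by
  intro hEq
  rcases azc_cases hn with ⟨hvn, hclsn⟩ | ⟨hvn, hnEn, hclsn⟩
  · -- n small
    rcases eq_or_lt_of_le hj with hj1 | hj2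
    · -- j = 1, value 1
      rw [← hj1, azc_one] at hEq
      rcases hclsn with hEn | ⟨hn1, hn2, hn3⟩
      · obtain ⟨k, hk, hbn, hf3, _, _⟩ := azE_val_facts hn hEn
        omega
      · have ht1 : 1 ≤ azb n := azb_ge_one hn
        obtain ⟨hs1, hs2⟩ := az_small_shape ht1 rfl hn3
        have ht : azb n = 1 := by omega
        rw [ht, azb_one] at hs1
        exact hn2 (by rw [hs1]; simpa using azE_one)
    · rcases azc_cases (show 2 ≤ j by omega) with ⟨hvj, hclsj⟩ | ⟨hvj, hnEj, hclsj⟩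
      · -- both small
        rcases hclsn with hEn | ⟨hn1, hn2, hn3⟩
        · obtain ⟨k, hk, hbn, hf3, hp1, hp2⟩ := azE_val_facts hn hEn
          rcases hclsj with hEj | ⟨hj1', hj2', hj3'⟩
          · obtain ⟨i, hi, hbj, hf3', _, _⟩ := azE_val_facts (by omega) hEj
            obtain ⟨k', hk', hkEq⟩ := azE_two_le hn hEn
            obtain ⟨i', hi', hiEq⟩ := azE_two_le (by omega) hEj
            -- values equal → fib (2i') = fib (2k')
            have hbn' : azb n = fib (2*k') - 1 := by rw [hkEq]; exact az_f2 k' (by omega)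
            have hbj' : azb j = fib (2*i') - 1 := by rw [hiEq]; exact az_f2 i' (by omega)
            have h4a : fib 4 ≤ fib (2*k') := Nat.fib_mono (by omega)
            have h4b : fib 4 ≤ fib (2*i') := Nat.fib_mono (by omega)
            rw [fib4] at h4a h4b
            have hfe : fib (2*i') = fib (2*k') := by omega
            rcases lt_trichotomy (2*i') (2*k') with hlt | heq | hgt
            · have := (Nat.fib_lt_fib (by omega : 2 ≤ 2*i')).2 hlt
              omega
            · have : i' = k' := by omega
              subst this
              omega
            · have := (Nat.fib_lt_fib (by omega : 2 ≤ 2*k')).2 hgt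
              omega
          · -- j generic small: jump at value, but n exceptional gives plateau
            have hu1 : 1 ≤ azb j := azb_ge_one (by omega)
            obtain ⟨hs1', hs2'⟩ := az_small_shape hu1 rfl hj3'
            have huv : azb j = azb n := by omega
            rw [huv] at hs2'
            omega
        · have ht1 : 1 ≤ azb n := azb_ge_one hn
          obtain ⟨hs1, hs2⟩ := az_small_shape ht1 rfl hn3
          rcases hclsj with hEj | ⟨hj1', hj2', hj3'⟩
          · obtain ⟨i, hi, hbj, hf3', hp1, hp2⟩ := azE_val_facts (by omega) hEj
            have huv : azb j = azb n := by omega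
            rw [huv] at hp1 hp2
            omega
          · have hu1 : 1 ≤ azb j := azb_ge_one (by omega)
            obtain ⟨hs1', hs2'⟩ := az_small_shape hu1 rfl hj3'
            have huv : azb j = azb n := by omega
            rw [huv] at hs1'
            omega
      · -- j large, n small
        rcases hclsj with ⟨hEpj, hplatj⟩ | ⟨hnEpj, hjumpj⟩
        · -- j nongeneric large: value fib (2i+2)
          obtain ⟨i, hi, hji⟩ := azE_pred_fib (by omega) hEpj
          have hbj1 : azb (j+1) = fib (2*i) := by
            rw [hji]; exact az_f3 i hi
          have hadd : fib (2*i+2) = fib (2*i) + fib (2*i+1) := Nat.fib_add_two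
          have hu : azc j = fib (2*i+2) := by
            rw [hvj, hbj1, hji]
            omega
          rcases hclsn with hEn | ⟨hn1, hn2, hn3⟩
          · obtain ⟨k, hk, hbn, hf3, _, _⟩ := azE_val_facts hn hEn
            exact az_fib_ne hk hi (by omega)
          · have ht1 : 1 ≤ azb n := azb_ge_one hn
            obtain ⟨hs1, hs2⟩ := az_small_shape ht1 rfl hn3
            have hf4 := az_f4 (i+1) (by omega)
            rw [show 2*(i+1)-1 = 2*i+1 from by omega, show 2*(i+1) = 2*i+2 from by ring] at hf4
            have hbn : azb n = fib (2*i+2) := by omega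
            have hfpos : 1 ≤ fib (2*i+1) := Nat.fib_pos.2 (by omega)
            have hadd2 : fib (2*i+1+2) = fib (2*i+1) + fib (2*i+1+1) := Nat.fib_add_two
            rw [show 2*i+1+2 = 2*i+3 from by omega, show 2*i+1+1 = 2*i+2 from by omega] at hadd2
            have hf4' : azb (azb n) = fib (2*i+1) - 1 := by rw [hbn]; exact hf4
            have hfn : n = fib (2*i+3) := by omega
            refine hn2 ⟨i+1, by omega, ?_⟩
            rw [show 2*(i+1)+1 = 2*i+3 from by ring]
            omega
        · -- j generic large
          have hbj : 1 ≤ azb j := azb_ge_one (by omega)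
          obtain ⟨he1, he2⟩ := az_emit (show 1 ≤ j by omega) hjumpj
          have hu : azc j = j + azb j + 1 := by rw [hvj, hjumpj]; omega
          rcases hclsn with hEn | ⟨hn1, hn2, hn3⟩
          · obtain ⟨k, hk, hbn, hf3, hp1, hp2⟩ := azE_val_facts hn hEn
            have key : j + azb j + 1 = azb n := by omega
            rw [key] at he1
            refine hnEj ⟨k-1, by omega, ?_⟩
            rw [show 2*(k-1)+1 = 2*k-1 from by omega]
            omega
          · have ht1 : 1 ≤ azb n := azb_ge_one hn
            obtain ⟨hs1, hs2⟩ := az_small_shape ht1 rfl hn3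
            have key : j + azb j + 1 = azb n := by omega
            have key2 : j + azb j + 2 = azb n + 1 := by omega
            rw [key] at he1
            rw [key2] at he2
            omega
  · -- n large
    have hg : 1 ≤ azb (n+1) := azb_ge_one (by omega)
    rcases eq_or_lt_of_le hj with hj1 | hj2
    · rw [← hj1, azc_one] at hEq
      omega
    · rcases azc_cases (show 2 ≤ j by omega) with ⟨hvj, _⟩ | ⟨hvj, _, _⟩
      · have := azb_lt j (by omega)
        omega
      · have h1 : azb (j+1) ≤ azb n := azb_mono (by omega)
        have h2 : azb n ≤ azb (n+1) := azb_mono (by omega)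
        omega

lemma azc_min {n : ℕ} (hn : 2 ≤ n) (hbig : n + 2 ≤ azc n) :
    ∃ j, 1 ≤ j ∧ j < n ∧ azc j = azc n - (n+1) := by
  rcases azc_cases hn with ⟨hvn, _⟩ | ⟨hvn, hnEn, hclsn⟩
  · exfalso
    have := azb_lt n (by omega)
    omega
  · rcases hclsn with ⟨hEp, hplat⟩ | ⟨hnEp, hjump⟩
    · -- nongeneric large
      obtain ⟨i, hi, hni⟩ := azE_pred_fib hn hEp
      have hbn1 : azb (n+1) = fib (2*i) := by rw [hni]; exact az_f3 i hi
      have hi2 : 2 ≤ i := by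
        by_contra hc
        have : i = 1 := by omega
        subst this
        have : fib (2*1) = 1 := by decide
        omega
      have hf5' : fib 5 ≤ fib (2*i+1) := Nat.fib_mono (by omega)
      rw [fib5] at hf5'
      have hEj : azE (n-1) := hEp
      refine ⟨n-1, by omega, by omega, ?_⟩
      have h2 : azc (n-1) = azb (n-1) := azc_of_E (by omega) hEj
      have h3 : azb (n-1) = fib (2*i) - 1 := by
        rw [hni, show fib (2*i+1) - 1 = fib (2*i+1) - 1 from rfl]
        exact az_f2 i hi
      omega
    · -- generic large
      have ht1 : 1 ≤ azb n := azb_ge_one hn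
      by_cases hjt : azb (azb n + 1) = azb (azb n) + 1
      · obtain ⟨he1, he2⟩ := az_emit ht1 hjt
        have hjle : azb n + azb (azb n) + 1 ≤ n := (azb_ge_iff ht1).1 (le_refl _)
        have hjne : azb n + azb (azb n) + 1 ≠ n := by
          intro hEqn
          rw [show azb n + azb (azb n) + 2 = n + 1 from by omega] at he2
          omega
        set j := azb n + azb (azb n) + 1 with hjdef
        have hj2 : 2 ≤ j := by omega
        by_cases hEj : azE j
        · exact ⟨j, by omega, by omega, by rw [azc_of_E hj2 hEj, he1]; omega⟩
        · by_cases hEjp : azE (j-1)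
          · obtain ⟨i, hi, hji⟩ := azE_pred_fib hj2 hEjp
            have hbj : azb j = fib (2*i) := by rw [hji]; exact az_f1 i
            rw [he1] at hbj
            by_cases hi1 : i = 1
            · subst hi1
              have hfib2 : fib (2*1) = 1 := by decide
              refine ⟨1, le_refl 1, by omega, ?_⟩
              rw [azc_one]
              omega
            · have hq2 : 2 ≤ fib (2*i-1) := by
                have := Nat.fib_mono (show 3 ≤ 2*i-1 by omega)
                rw [fib3] at this
                omega
              have hqE : azE (fib (2*i-1) - 1) :=
                ⟨i-1, by omega, by rw [show 2*(i-1)+1 = 2*i-1 from by omega]⟩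
              have hqnE : ¬ azE (fib (2*i-1)) := by
                have := azE_fib_odd_false (k := i-1) (by omega)
                rwa [show 2*(i-1)+1 = 2*i-1 from by omega] at this
              have hc : azc (fib (2*i-1)) = fib (2*i-1) + azb (fib (2*i-1) + 1) :=
                azc_of_Epred hq2 hqnE (by simpa using hqE)
              have hf3' := az_f3 (i-1) (by omega)
              rw [show 2*(i-1)+1 = 2*i-1 from by omega, show 2*(i-1) = 2*i-2 from by omega] at hf3'
              have hsum : fib (2*i-2+2) = fib (2*i-2) + fib (2*i-2+1) := Nat.fib_add_two
              rw [show 2*i-2+2 = 2*i from by omega, show 2*i-2+1 = 2*i-1 from by omega] at hsum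
              have hqlt : fib (2*i-1) < fib (2*i+1) := by
                exact (Nat.fib_lt_fib (by omega : 2 ≤ 2*i-1)).2 (by omega)
              refine ⟨fib (2*i-1), by omega, by omega, ?_⟩
              rw [hc, hf3']
              omega
          · have hplatj : azb (j+1) = azb j := by
              rw [show j + 1 = azb n + azb (azb n) + 2 from by omega, he2, he1]
            have hc : azc j = azb j := azc_of_plateau hj2 hEj hEjp hplatj
            exact ⟨j, by omega, by omega, by rw [hc, he1]; omega⟩
      · -- no jump at t = azb n
        have hplatt : azb (azb n + 1) = azb (azb n) := (azb_dichotomy (azb n)).resolve_right hjt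
        have ht2 : 2 ≤ azb n := by
          by_contra hc
          have h1 : azb n = 1 := by omega
          rw [h1, azb_two, azb_one] at hplatt
          omega
        have hp1 : 1 ≤ azb (azb n) := azb_ge_one ht2
        obtain ⟨hs1, hs2⟩ := az_small_shape hp1 rfl hplatt
        by_cases hEp2 : azE (azb (azb n))
        · obtain ⟨i2, hi2, hpEq⟩ := hEp2
          have hfp : 1 ≤ fib (2*i2+1) := Nat.fib_pos.2 (by omega)
          have hbp : azb (azb (azb n)) = fib (2*i2) - 1 := by
            rw [hpEq]; exact az_f2 i2 hi2
          have hfp2 : 1 ≤ fib (2*i2) := Nat.fib_pos.2 (by omega)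
          have hadd0 : fib (2*i2+2) = fib (2*i2) + fib (2*i2+1) := Nat.fib_add_two
          have htEq : azb n = fib (2*i2+2) - 1 := by omega
          set w := fib (2*i2+3) - 1 with hwdef
          have hwE : azE w := ⟨i2+1, by omega, by rw [show 2*(i2+1)+1 = 2*i2+3 from by ring]⟩
          have hw4 : fib 5 ≤ fib (2*i2+3) := Nat.fib_mono (by omega)
          rw [fib5] at hw4
          have hw2 : 2 ≤ w := by omega
          have hcw : azc w = azb w := azc_of_E hw2 hwE
          have hbw : azb w = fib (2*i2+2) - 1 := by
            rw [hwdef]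
            have := az_f2 (i2+1) (by omega)
            rwa [show 2*(i2+1)+1 = 2*i2+3 from by ring, show 2*(i2+1) = 2*i2+2 from by ring] at this
          have hnw : w ≤ n := by
            have h1 : azb n + azb (azb n) + 1 ≤ n := (azb_ge_iff ht1).1 (le_refl _)
            have hsum2 : fib (2*i2+1+2) = fib (2*i2+1) + fib (2*i2+1+1) := Nat.fib_add_two
            rw [show 2*i2+1+2 = 2*i2+3 from by omega, show 2*i2+1+1 = 2*i2+2 from by omega] at hsum2
            omega
          have hwne : w ≠ n := fun hc => hnEn (hc ▸ hwE)
          refine ⟨w, by omega, by omega, ?_⟩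
          rw [hcw, hbw]
          omega
        · by_cases hEpp : azE (azb (azb n) - 1)
          · exfalso
            have hpp2 : 2 ≤ azb (azb n) := by
              by_contra hcc
              have h1 : azb (azb n) = 1 := by omega
              exact hEp2 (by rw [h1]; exact azE_one)
            obtain ⟨i3, hi3, hpi⟩ := azE_pred_fib hpp2 hEpp
            have hbp : azb (azb (azb n)) = fib (2*i3) := by rw [hpi]; exact az_f1 i3
            have hadd3 : fib (2*i3+2) = fib (2*i3) + fib (2*i3+1) := Nat.fib_add_two
            have hfq : 1 ≤ fib (2*i3+1) := Nat.fib_pos.2 (by omega)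
            have htEq : azb n = fib (2*i3+2) + 1 := by omega
            have hf6' := az_f6 (i3+1) (by omega)
            rw [show 2*(i3+1)-1 = 2*i3+1 from by omega, show 2*(i3+1) = 2*i3+2 from by ring] at hf6'
            have hf8' := az_f8 (i3+1) (by omega)
            rw [show 2*(i3+1)-1 = 2*i3+1 from by omega, show 2*(i3+1) = 2*i3+2 from by ring] at hf8'
            rw [htEq] at hplatt
            rw [show fib (2*i3+2) + 1 + 1 = fib (2*i3+2) + 2 from by ring] at hplatt
            rw [hf8', hf6'] at hplatt
            omega
          · have hpp2 : 2 ≤ azb (azb n) := by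
              by_contra hcc
              have h1 : azb (azb n) = 1 := by omega
              exact hEp2 (by rw [h1]; exact azE_one)
            have hc : azc (azb (azb n)) = azb (azb n) + azb (azb (azb n) + 1) :=
              azc_of_jump hpp2 hEp2 hEpp hs2
            have hplt : azb (azb n) < azb n := azb_lt (azb n) (by omega)
            have htlt : azb n < n := azb_lt n (by omega)
            refine ⟨azb (azb n), by omega, by omega, ?_⟩
            rw [hc, hs2]
            omega

lemma azc_pos {n : ℕ} (hn : 1 ≤ n) : 1 ≤ azc n := by
  rcases eq_or_lt_of_le hn with h1 | h2
  · rw [← h1, azc_one]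
  · have hn2 : 2 ≤ n := h2
    rcases azc_cases hn2 with ⟨hv, _⟩ | ⟨hv, _, _⟩
    · rw [hv]; exact azb_ge_one hn2
    · rw [hv]; omega

lemma azc_le {n : ℕ} (hn : 1 ≤ n) : azc n ≤ 2*n := by
  rcases eq_or_lt_of_le hn with h1 | h2
  · rw [← h1, azc_one]; omega
  · have hn2 : 2 ≤ n := h2
    rcases azc_cases hn2 with ⟨hv, _⟩ | ⟨hv, _, _⟩
    · have := azb_lt n (by omega)
      omega
    · have := azb_lt (n+1) (by omega)
      omega

lemma az_z (z : ℕ → ℕ) (hz1 : z 1 = 1)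
    (hz : ∀ n : ℕ, 2 ≤ n →
      IsLeast {m : ℕ | 0 < m ∧ (∀ i ∈ Finset.Icc 1 (n - 1), z i ≠ m) ∧
        ((∑ i ∈ Finset.Icc 1 (n - 1), z i) + m) % (n + 1) = 1} (z n)) :
    ∀ n : ℕ, 1 ≤ n → z n = azc n := by
  intro n
  induction n using Nat.strong_induction_on with
  | _ n ih =>
    intro hn
    rcases eq_or_lt_of_le hn with h1 | h2
    · rw [← h1, hz1, azc_one]
    · have hn2 : 2 ≤ n := h2
      have hzeq : ∀ i ∈ Finset.Icc 1 (n-1), z i = azc i := by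
        intro i hi
        rw [Finset.mem_Icc] at hi
        exact ih i (by omega) (by omega)
      have hsum : (∑ i ∈ Finset.Icc 1 (n-1), z i) = 1 + azS (n-1) := by
        rw [Finset.sum_congr rfl hzeq, azc_sum (by omega)]
      have hstep : azS n = azS (n-1) + azc n := by
        have := azS_step (n := n-1) (by omega)
        rwa [show n-1+1 = n from by omega] at this
      have hSn : ∃ M, azS n = (n+1) * M := by
        unfold azS
        exact ⟨_, rfl⟩
      have hmod : ((∑ i ∈ Finset.Icc 1 (n-1), z i) + azc n) % (n+1) = 1 := by
        rw [hsum]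
        obtain ⟨M, hM⟩ := hSn
        rw [show 1 + azS (n-1) + azc n = 1 + azS n from by omega, hM,
            Nat.add_mul_mod_self_left]
        exact Nat.mod_eq_of_lt (by omega)
      have hmem : azc n ∈ {m : ℕ | 0 < m ∧ (∀ i ∈ Finset.Icc 1 (n - 1), z i ≠ m) ∧
          ((∑ i ∈ Finset.Icc 1 (n - 1), z i) + m) % (n + 1) = 1} := by
        refine ⟨azc_pos (by omega), ?_, hmod⟩
        intro i hi
        have hi' := Finset.mem_Icc.1 hi
        rw [hzeq i hi]
        exact azc_inj (by omega) (by omega) hn2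
      have hlb : ∀ m' ∈ {m : ℕ | 0 < m ∧ (∀ i ∈ Finset.Icc 1 (n - 1), z i ≠ m) ∧
          ((∑ i ∈ Finset.Icc 1 (n - 1), z i) + m) % (n + 1) = 1}, azc n ≤ m' := by
        intro m' hm'
        obtain ⟨hpos, hnotin, hmod'⟩ := hm'
        by_contra hcon
        push_neg at hcon
        have hdvd : (n+1) ∣ (azc n - m') := by
          have heqmod : ((∑ i ∈ Finset.Icc 1 (n-1), z i) + m') % (n+1)
              = ((∑ i ∈ Finset.Icc 1 (n-1), z i) + azc n) % (n+1) := by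
            rw [hmod', hmod]
          have hme2 : Nat.ModEq (n+1) m' (azc n) :=
            Nat.ModEq.add_left_cancel' _ heqmod
          exact (Nat.modEq_iff_dvd' (le_of_lt hcon)).1 hme2
        obtain ⟨q, hq⟩ := hdvd
        have hle := azc_le (show 1 ≤ n by omega)
        have hq1 : q = 1 := by
          rcases q with _ | _ | q
          · omega
          · rfl
          · exfalso
            have : azc n - m' = (n+1) * (q+2) := hq
            have h2n : (n+1) * (q+2) ≥ 2*(n+1) := by nlinarith
            omega
        subst hq1
        obtain ⟨jj, hj1, hj2, hj3⟩ := azc_min hn2 (by omega)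
        have hzjj : z jj = azc jj := ih jj (by omega) (by omega)
        exact hnotin jj (Finset.mem_Icc.mpr (by omega)) (by rw [hzjj, hj3]; omega)
      exact (hz n hn2).unique ⟨hmem, hlb⟩

/-- Averages of the Avdispahić–Zejnulahi sequence: with `z` the greedy
Avdispahić–Zejnulahi sequence and `m(n) = (z(2) + ⋯ + z(n))/(n+1)` (an
integer), and `γ = (√5−1)/2`, one has `m(n) = ⌊(n+1)γ⌋` for every `n ≥ 1`
not of the form `F_{2k+1} − 1` (`k ≥ 1`); and for all `k ≥ 1`,
`m(F_{2k+1} − 1) = F_{2k} − 1` while `⌊F_{2k+1}·γ⌋ = F_{2k}`. -/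
theorem avdispahic_zejnulahi_averages
    (γ : ℝ) (hγ : γ = (Real.sqrt 5 - 1) / 2)
    (z : ℕ → ℕ) (hz1 : z 1 = 1)
    (hz : ∀ n : ℕ, 2 ≤ n →
      IsLeast {m : ℕ | 0 < m ∧ (∀ i ∈ Finset.Icc 1 (n - 1), z i ≠ m) ∧
        ((∑ i ∈ Finset.Icc 1 (n - 1), z i) + m) % (n + 1) = 1} (z n))
    (m : ℕ → ℕ)
    (hm : ∀ n : ℕ, 1 ≤ n → (n + 1) * m n = ∑ i ∈ Finset.Icc 2 n, z i) :
    (∀ n : ℕ, 1 ≤ n → (¬ ∃ k : ℕ, 1 ≤ k ∧ n = Nat.fib (2 * k + 1) - 1) →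
      m n = ⌊((n : ℝ) + 1) * γ⌋₊) ∧
    (∀ k : ℕ, 1 ≤ k →
      m (Nat.fib (2 * k + 1) - 1) = Nat.fib (2 * k) - 1 ∧
      ⌊(Nat.fib (2 * k + 1) : ℝ) * γ⌋₊ = Nat.fib (2 * k)) := by
  have hγ2 : γ = azg := by rw [hγ]; rfl
  have hzz := az_z z hz1 hz
  have hS : ∀ n, 1 ≤ n → (∑ i ∈ Finset.Icc 2 n, z i) = azS n := by
    intro n hn
    have hzeq : ∀ i ∈ Finset.Icc 1 n, z i = azc i := by
      intro i hi
      have hi' := Finset.mem_Icc.1 hi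
      exact hzz i (by omega)
    have h1 : (∑ i ∈ Finset.Icc 1 n, z i) = 1 + azS n := by
      rw [Finset.sum_congr rfl hzeq, azc_sum hn]
    have h2 : Finset.Icc 1 n = insert 1 (Finset.Icc 2 n) := by
      ext x
      simp only [Finset.mem_Icc, Finset.mem_insert]
      omega
    rw [h2, Finset.sum_insert (by simp), hz1] at h1
    omega
  have hmM0 : ∀ n, 1 ≤ n → ¬ azE n → m n = azb (n+1) := by
    intro n hn hne
    have h := hm n hn
    rw [hS n hn] at h
    unfold azS at h
    rw [if_neg hne, Nat.sub_zero] at h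
    exact Nat.eq_of_mul_eq_mul_left (by omega) h
  have hmM1 : ∀ n, 1 ≤ n → azE n → m n = azb (n+1) - 1 := by
    intro n hn hne
    have h := hm n hn
    rw [hS n hn] at h
    unfold azS at h
    rw [if_pos hne] at h
    exact Nat.eq_of_mul_eq_mul_left (by omega) h
  constructor
  · intro n hn hne
    have hnE : ¬ azE n := hne
    rw [hmM0 n hn hnE]
    show azb (n+1) = _
    unfold azb
    rw [hγ2]
    congr 1
    push_cast
    ring
  · intro k hk
    have hfpos : 1 ≤ fib (2*k+1) := Nat.fib_pos.2 (by omega)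
    have hf2 : fib 3 ≤ fib (2*k+1) := Nat.fib_mono (by omega)
    rw [fib3] at hf2
    have hE : azE (fib (2*k+1) - 1) := ⟨k, hk, rfl⟩
    constructor
    · rw [hmM1 _ (by omega) hE,
          show fib (2*k+1) - 1 + 1 = fib (2*k+1) from by omega, az_f1 k]
    · rw [hγ2]
      exact az_f1 k

end
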